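/- Fix A ∈ ℝ^{p×k} with AᵀA = I_k and X ∈ ℝ^{n×p}, λ, λ₁ > 0. Consider f(B) = ‖X − X B Aᵀ‖_F² + λ‖B‖_F² + λ₁ Σ_{i=1}^p ‖B_{(i)}‖₂ over B ∈ ℝ^{p×k}. At a minimizer B, for each i define b_i = Σ_{j≠i} (X^{(j)ᵀ}X^{(i)}) B_{(j)}ᵀ. Then the i-th row of B is zero if and only if ‖AᵀXᵀX^{(i)} − b_i‖₂ ≤ λ₁/2. -/

import Mathlib

open Matrix

noncomputable def frob {m n : Type*} [Fintype m] [Fintype n] (A : Matrix m n ℝ) : ℝ :=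
  Real.sqrt (∑ i, ∑ j, A i j ^ 2)

noncomputable def enorm₂ {k : Type*} [Fintype k] (v : k → ℝ) : ℝ :=
  Real.sqrt (∑ i, v i ^ 2)

private theorem sum_comm3' {α : Type*} [AddCommMonoid α] {n m k : ℕ}
    (f : Fin n → Fin m → Fin k → α) :
    ∑ r, ∑ s, ∑ j, f r s j = ∑ j, ∑ r, ∑ s, f r s j := by
  have h1 : ∀ r, ∑ s, ∑ j, f r s j = ∑ j, ∑ s, f r s j := fun r => Finset.sum_comm
  simp_rw [h1]
  exact Finset.sum_comm

private theorem frob_sq' {q r : ℕ} (M : Matrix (Fin q) (Fin r) ℝ) :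
    frob M ^ 2 = ∑ a, ∑ b, M a b ^ 2 :=
  Real.sq_sqrt (by positivity)

private theorem enorm_sq' {q : ℕ} (v : Fin q → ℝ) :
    enorm₂ v ^ 2 = ∑ a, v a ^ 2 :=
  Real.sq_sqrt (by positivity)

theorem stmt7 {n p k : ℕ} (X : Matrix (Fin n) (Fin p) ℝ) (A : Matrix (Fin p) (Fin k) ℝ)
    (hA : Aᵀ * A = 1) (lam lam1 : ℝ) (hlam : 0 < lam) (hlam1 : 0 < lam1)
    (B : Matrix (Fin p) (Fin k) ℝ)
    (hmin : ∀ C : Matrix (Fin p) (Fin k) ℝ,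
      frob (X - X * B * Aᵀ) ^ 2 + lam * frob B ^ 2 + lam1 * ∑ i, enorm₂ (B i)
        ≤ frob (X - X * C * Aᵀ) ^ 2 + lam * frob C ^ 2 + lam1 * ∑ i, enorm₂ (C i)) :
    ∀ i : Fin p,
      B i = 0 ↔
        enorm₂ ((Aᵀ * Xᵀ).mulVec (fun r => X r i)
            - ∑ j ∈ Finset.univ.erase i, (∑ r, X r j * X r i) • B j) ≤ lam1 / 2 := by
  intro i
  set w : Fin k → ℝ := (Aᵀ * Xᵀ).mulVec (fun r => X r i)
      - ∑ j ∈ Finset.univ.erase i, (∑ r, X r j * X r i) • B j with hw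
  set c : ℝ := ∑ r, X r i ^ 2 with hc
  have hA' : ∀ m m', ∑ s, A s m * A s m' = if m = m' then 1 else 0 := by
    intro m m'
    have := congrFun (congrFun hA m) m'
    simpa [Matrix.mul_apply, Matrix.one_apply] using this
  -- row update formula for X * updateRow
  have hXU : ∀ (v : Fin k → ℝ) r m, (X * B.updateRow i v) r m
      = (X * B.updateRow i 0) r m + X r i * v m := by
    intro v r m
    simp only [Matrix.mul_apply, Matrix.updateRow_apply, Pi.zero_apply]
    have h : ∀ j, X r j * (if j = i then v m else B j m)
        = X r j * (if j = i then 0 else B j m) + (if j = i then X r j * v m else 0) := by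
      intro j; by_cases h : j = i <;> simp [h]
    rw [Finset.sum_congr rfl fun j _ => h j, Finset.sum_add_distrib]
    simp
  have hprod : ∀ (v : Fin k → ℝ) r s, (X * B.updateRow i v * Aᵀ) r s
      = (X * B.updateRow i 0 * Aᵀ) r s + X r i * ∑ m, v m * A s m := by
    intro v r s
    have e1 : (X * B.updateRow i v * Aᵀ) r s = ∑ m, (X * B.updateRow i v) r m * A s m := by
      rw [Matrix.mul_apply]; exact Finset.sum_congr rfl fun m _ => rfl
    have e0 : (X * B.updateRow i 0 * Aᵀ) r s = ∑ m, (X * B.updateRow i 0) r m * A s m := by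
      rw [Matrix.mul_apply]; exact Finset.sum_congr rfl fun m _ => rfl
    rw [e1, e0]
    simp_rw [hXU v r]
    rw [Finset.mul_sum, ← Finset.sum_add_distrib]
    exact Finset.sum_congr rfl fun m _ => by ring
  -- orthonormality: ∑ s (∑ m v m A s m)^2 = ∑ v²
  have hT : ∀ v : Fin k → ℝ, ∑ s, (∑ m, v m * A s m) ^ 2 = ∑ m, v m ^ 2 := by
    intro v
    calc ∑ s, (∑ m, v m * A s m) ^ 2
        = ∑ s, ∑ m, ∑ m', (v m * v m') * (A s m * A s m') := by
          refine Finset.sum_congr rfl fun s _ => ?_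
          rw [sq, Finset.sum_mul_sum]
          exact Finset.sum_congr rfl fun m _ => Finset.sum_congr rfl fun m' _ => by ring
      _ = ∑ m, ∑ m', (v m * v m') * ∑ s, (A s m * A s m') := by
          rw [Finset.sum_comm]
          refine Finset.sum_congr rfl fun m _ => ?_
          rw [Finset.sum_comm]
          exact Finset.sum_congr rfl fun m' _ => (Finset.mul_sum _ _ _).symm
      _ = ∑ m, v m ^ 2 := by
          simp only [hA', mul_ite, mul_one, mul_zero, Finset.sum_ite_eq, Finset.mem_univ,
            if_true, sq]
  have hP1 : ∀ v : Fin k → ℝ,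
      ∑ r, ∑ s, X r s * (X r i * ∑ m, v m * A s m)
        = ∑ m, v m * (Aᵀ * Xᵀ).mulVec (fun r => X r i) m := by
    intro v
    calc ∑ r, ∑ s, X r s * (X r i * ∑ m, v m * A s m)
        = ∑ r, ∑ s, ∑ m, v m * (A s m * X r s * X r i) := by
          refine Finset.sum_congr rfl fun r _ => Finset.sum_congr rfl fun s _ => ?_
          rw [Finset.mul_sum, Finset.mul_sum]
          exact Finset.sum_congr rfl fun m _ => by ring
      _ = ∑ m, ∑ r, ∑ s, v m * (A s m * X r s * X r i) := sum_comm3' _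
      _ = ∑ m, v m * (Aᵀ * Xᵀ).mulVec (fun r => X r i) m := by
          refine Finset.sum_congr rfl fun m _ => ?_
          simp only [Matrix.mulVec, Matrix.mul_apply, dotProduct, Matrix.transpose_apply,
            Finset.sum_mul, Finset.mul_sum]
          try exact Finset.sum_congr rfl fun r _ => Finset.sum_congr rfl fun s _ => by ring
  have hP2 : ∀ v : Fin k → ℝ,
      ∑ r, ∑ s, (X * B.updateRow i 0 * Aᵀ) r s * (X r i * ∑ m, v m * A s m)
        = ∑ m, v m * (∑ j ∈ Finset.univ.erase i, (∑ r, X r j * X r i) • B j) m := by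
    intro v
    have hU0 : ∀ m, ∑ r, (X * B.updateRow i 0) r m * X r i
        = ∑ j ∈ Finset.univ.erase i, (∑ r, X r j * X r i) * B j m := by
      intro m
      have h1 : ∀ r, (X * B.updateRow i 0) r m * X r i
          = ∑ j, (if j = i then 0 else X r j * B j m * X r i) := by
        intro r
        simp only [Matrix.mul_apply, Matrix.updateRow_apply, Pi.zero_apply, Finset.sum_mul]
        exact Finset.sum_congr rfl fun j _ => by by_cases h : j = i <;> simp [h]
      simp_rw [h1]
      rw [Finset.sum_comm]
      have h2 : ∀ j, ∑ r, (if j = i then 0 else X r j * B j m * X r i)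
          = if j = i then 0 else (∑ r, X r j * X r i) * B j m := by
        intro j; by_cases h : j = i <;> simp [h, Finset.sum_mul, Finset.mul_sum]
        exact Finset.sum_congr rfl fun r _ => by ring
      simp_rw [h2]
      rw [← Finset.add_sum_erase _ _ (Finset.mem_univ i)]
      simp only [eq_self_iff_true, if_true, ite_true, zero_add]
      exact Finset.sum_congr rfl fun j hj => by rw [if_neg (Finset.ne_of_mem_erase hj)]
    calc ∑ r, ∑ s, (X * B.updateRow i 0 * Aᵀ) r s * (X r i * ∑ m, v m * A s m)
        = ∑ r, ∑ s, ∑ m, ∑ m', v m * ((A s m * A s m')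
            * ((X * B.updateRow i 0) r m' * X r i)) := by
          refine Finset.sum_congr rfl fun r _ => Finset.sum_congr rfl fun s _ => ?_
          rw [Matrix.mul_apply, Finset.mul_sum, Finset.sum_mul_sum]
          rw [Finset.sum_comm]
          refine Finset.sum_congr rfl fun m _ => Finset.sum_congr rfl fun m' _ => by
            simp [Matrix.transpose_apply]; ring
      _ = ∑ m, ∑ r, ∑ s, ∑ m', v m * ((A s m * A s m')
            * ((X * B.updateRow i 0) r m' * X r i)) := sum_comm3' _
      _ = ∑ m, ∑ m', ∑ r, (∑ s, A s m * A s m')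
            * (v m * ((X * B.updateRow i 0) r m' * X r i)) := by
          refine Finset.sum_congr rfl fun m _ => ?_
          rw [sum_comm3']
          refine Finset.sum_congr rfl fun m' _ => Finset.sum_congr rfl fun r _ => ?_
          rw [Finset.sum_mul]
          exact Finset.sum_congr rfl fun s _ => by ring
      _ = ∑ m, v m * ∑ r, (X * B.updateRow i 0) r m * X r i := by
          refine Finset.sum_congr rfl fun m _ => ?_
          simp only [hA']
          rw [Finset.sum_comm]
          simp only [ite_mul, one_mul, zero_mul, Finset.sum_ite_eq, Finset.mem_univ, if_true]
          rw [Finset.mul_sum]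
      _ = ∑ m, v m * (∑ j ∈ Finset.univ.erase i, (∑ r, X r j * X r i) • B j) m := by
          refine Finset.sum_congr rfl fun m _ => ?_
          rw [hU0]
          simp [Finset.sum_apply]
  have hcross : ∀ v : Fin k → ℝ,
      ∑ r, ∑ s, (X - X * B.updateRow i 0 * Aᵀ) r s * (X r i * ∑ m, v m * A s m)
        = ∑ m, v m * w m := by
    intro v
    have h1 : ∀ r s, (X - X * B.updateRow i 0 * Aᵀ) r s * (X r i * ∑ m, v m * A s m)
        = X r s * (X r i * ∑ m, v m * A s m)
          - (X * B.updateRow i 0 * Aᵀ) r s * (X r i * ∑ m, v m * A s m) := by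
      intro r s; simp [Matrix.sub_apply, sub_mul]
    simp_rw [h1, Finset.sum_sub_distrib]
    rw [hP1 v, hP2 v, ← Finset.sum_sub_distrib]
    refine Finset.sum_congr rfl fun m _ => ?_
    rw [hw]
    simp [Pi.sub_apply, mul_sub]
  -- the quadratic expansion of the smooth part
  have hq : ∀ v : Fin k → ℝ,
      frob (X - X * B.updateRow i v * Aᵀ) ^ 2
        = frob (X - X * B.updateRow i 0 * Aᵀ) ^ 2
          + c * (∑ m, v m ^ 2) - 2 * (∑ m, v m * w m) := by
    intro v
    rw [frob_sq', frob_sq']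
    have hpt : ∀ r s, (X - X * B.updateRow i v * Aᵀ) r s ^ 2
        = (X - X * B.updateRow i 0 * Aᵀ) r s ^ 2
          - 2 * ((X - X * B.updateRow i 0 * Aᵀ) r s * (X r i * ∑ m, v m * A s m))
          + X r i ^ 2 * (∑ m, v m * A s m) ^ 2 := by
      intro r s
      simp only [Matrix.sub_apply]
      rw [hprod v r s]
      ring
    simp_rw [hpt, Finset.sum_add_distrib, Finset.sum_sub_distrib, ← Finset.mul_sum]
    rw [hcross v]
    simp_rw [hT v]
    rw [← Finset.sum_mul, ← hc]
    ring
  -- frobenius penalty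
  have hf2 : ∀ v : Fin k → ℝ, frob (B.updateRow i v) ^ 2
      = frob (B.updateRow i 0) ^ 2 + ∑ m, v m ^ 2 := by
    intro v
    rw [frob_sq', frob_sq']
    have h : ∀ v' : Fin k → ℝ, ∑ j, ∑ m, (B.updateRow i v') j m ^ 2
        = (∑ m, v' m ^ 2) + ∑ j ∈ Finset.univ.erase i, ∑ m, B j m ^ 2 := by
      intro v'
      rw [← Finset.add_sum_erase _ _ (Finset.mem_univ i)]
      congr 1
      · simp
      · exact Finset.sum_congr rfl fun j hj => by
          simp [Matrix.updateRow_ne (Finset.ne_of_mem_erase hj)]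
    rw [h, h]
    simp only [Pi.zero_apply, ne_eq, OfNat.ofNat_ne_zero, not_false_eq_true, zero_pow,
      Finset.sum_const_zero, zero_add]
    ring
  -- l1 penalty
  have hf3 : ∀ v : Fin k → ℝ, (∑ j, enorm₂ (B.updateRow i v j))
      = (∑ j, enorm₂ (B.updateRow i 0 j)) + enorm₂ v := by
    intro v
    have h : ∀ v' : Fin k → ℝ, ∑ j, enorm₂ (B.updateRow i v' j)
        = enorm₂ v' + ∑ j ∈ Finset.univ.erase i, enorm₂ (B j) := by
      intro v'
      rw [← Finset.add_sum_erase _ _ (Finset.mem_univ i)]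
      congr 1
      · simp
      · exact Finset.sum_congr rfl fun j hj => by
          simp [Matrix.updateRow_ne (Finset.ne_of_mem_erase hj)]
    rw [h, h]
    have : enorm₂ (0 : Fin k → ℝ) = 0 := by simp [enorm₂]
    rw [this]
    ring
  -- the one-row objective
  have hgmin : ∀ v : Fin k → ℝ,
      (c + lam) * (∑ m, B i m ^ 2) - 2 * (∑ m, B i m * w m) + lam1 * enorm₂ (B i)
        ≤ (c + lam) * (∑ m, v m ^ 2) - 2 * (∑ m, v m * w m) + lam1 * enorm₂ v := by
    intro v
    have hB : B.updateRow i (B i) = B := Matrix.updateRow_eq_self B i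
    have h1 := hmin (B.updateRow i v)
    have e1 := hq v
    have e2 := hf2 v
    have e3 := hf3 v
    have e1' := hq (B i)
    have e2' := hf2 (B i)
    have e3' := hf3 (B i)
    rw [hB] at e1' e2' e3'
    rw [e1, e2, e3] at h1
    rw [e1', e2', e3'] at h1
    linarith
  have hcs : ∀ u : Fin k → ℝ, ∑ m, u m * w m ≤ enorm₂ u * enorm₂ w := by
    intro u
    simpa [enorm₂] using Real.sum_mul_le_sqrt_mul_sqrt Finset.univ u w
  have hc0 : (0 : ℝ) ≤ c := Finset.sum_nonneg fun _ _ => sq_nonneg _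
  have hcl : (0 : ℝ) < c + lam := by linarith
  have henn : ∀ u : Fin k → ℝ, 0 ≤ enorm₂ u := fun u => Real.sqrt_nonneg _
  constructor
  · -- B i = 0 → enorm₂ w ≤ lam1 / 2
    intro hB0
    by_contra hcon
    push_neg at hcon
    have hepos : 0 < enorm₂ w := lt_trans (by positivity) hcon
    set e := enorm₂ w with he
    set t : ℝ := (2 * e - lam1) / (2 * (c + lam) * e) with ht
    have htpos : 0 < t := div_pos (by linarith) (by positivity)
    have h := hgmin (fun m => t * w m)
    rw [hB0] at h
    simp only [Pi.zero_apply, mul_zero, zero_mul, zero_pow, Finset.sum_const_zero] at h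
    have hz : enorm₂ (0 : Fin k → ℝ) = 0 := by simp [enorm₂]
    rw [hz] at h
    have hsum1 : ∑ m, (t * w m) ^ 2 = t ^ 2 * ∑ m, w m ^ 2 := by
      rw [Finset.mul_sum]; exact Finset.sum_congr rfl fun m _ => by ring
    have hsum2 : ∑ m, (t * w m) * w m = t * ∑ m, w m ^ 2 := by
      rw [Finset.mul_sum]; exact Finset.sum_congr rfl fun m _ => by ring
    have hwsq : ∑ m, w m ^ 2 = e ^ 2 := (enorm_sq' w).symm
    have hent : enorm₂ (fun m => t * w m) = t * e := by
      rw [show enorm₂ (fun m => t * w m) = Real.sqrt (∑ m, (t * w m) ^ 2) from rfl,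
        hsum1, hwsq, Real.sqrt_mul (sq_nonneg t), Real.sqrt_sq htpos.le,
        Real.sqrt_sq (henn w)]
    rw [hsum1, hsum2, hwsq, hent] at h
    norm_num at h
    have hte : (c + lam) * t * e = e - lam1 / 2 := by
      rw [ht]
      field_simp
    have key : (c + lam) * (t ^ 2 * e ^ 2) = (e - lam1 / 2) * (t * e) := by
      calc (c + lam) * (t ^ 2 * e ^ 2) = ((c + lam) * t * e) * (t * e) := by ring
        _ = (e - lam1 / 2) * (t * e) := by rw [hte]
    have hneg : (t * e) * (lam1 / 2 - e) < 0 :=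
      mul_neg_of_pos_of_neg (mul_pos htpos hepos) (by linarith)
    nlinarith [h, key, hneg]
  · -- enorm₂ w ≤ lam1 / 2 → B i = 0
    intro hle
    have h := hgmin 0
    simp only [Pi.zero_apply, mul_zero, zero_mul, zero_pow, Finset.sum_const_zero] at h
    have hz : enorm₂ (0 : Fin k → ℝ) = 0 := by simp [enorm₂]
    rw [hz] at h
    have h2 : ∑ m, B i m * w m ≤ enorm₂ (B i) * (lam1 / 2) :=
      le_trans (hcs (B i)) (mul_le_mul_of_nonneg_left hle (henn (B i)))
    norm_num at h
    have hSn : 0 ≤ ∑ m, B i m ^ 2 := Finset.sum_nonneg fun _ _ => sq_nonneg _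
    have hS1 : (c + lam) * (∑ m, B i m ^ 2) ≤ 0 := by linarith [h, h2]
    have hS0 : ∑ m, B i m ^ 2 = 0 :=
      (mul_eq_zero.1 (le_antisymm hS1 (mul_nonneg hcl.le hSn))).resolve_left hcl.ne'
    funext m
    have := (Finset.sum_eq_zero_iff_of_nonneg
      (fun m _ => sq_nonneg (B i m))).1 hS0 m (Finset.mem_univ m)
    simpa using (pow_eq_zero_iff (by norm_num : (2:ℕ) ≠ 0)).1 this
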